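/- Let k ≥ 1 and regard Igusa's map as a map Θ_k : [0,1]^k → Δ_k on the cube with coordinates ordered (t, x_1, …, x_{k−1}), i.e. (t,x) ↦ Θ_k(x,t). Then Θ_k is differentiable at Lebesgue-almost every point of [0,1]^k, and for every continuous function f : Δ_k → ℝ one has ∫_{[0,1]^k} f(Θ_k(x,t)) · det(DΘ_k(t,x)) dt dx = (−1)^k ∫_{Δ_k} f(u) du, where DΘ_k denotes the (almost everywhere defined) total derivative and both integrals are with respect to Lebesgue measure. In particular the degree of the map Θ_k : [0,1]^k → Δ_k is (−1)^k. -/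

import Mathlib

noncomputable section
open MeasureTheory Set

/-- The simplex `Δ_n = {t ∈ ℝ^n : 1 ≥ t_1 ≥ t_2 ≥ … ≥ t_n ≥ 0}`. -/
def ordSimplex (n : ℕ) : Set (Fin n → ℝ) :=
  {t | (∀ i, 0 ≤ t i) ∧ (∀ i, t i ≤ 1) ∧ ∀ i j : Fin n, i ≤ j → t j ≤ t i}

/-- The unit cube `[0,1]^k`. -/
def unitCube (k : ℕ) : Set (Fin k → ℝ) := {y | ∀ i, y i ∈ Set.Icc (0 : ℝ) 1}

/-- Extension of a finite tuple by `0` outside its range. -/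
def extF {m : ℕ} (x : Fin m → ℝ) (n : ℕ) : ℝ := if h : n < m then x ⟨n, h⟩ else 0

/-- The map `λ_k : [0,1]^{k-1} × [0,1] → [0,1]^k`; in closed form, its `m`-th coordinate
(1-based `m = i+1`, with `x_k := 1`) is `x_m · clamp_{[0,1]}((k−m+1) − k·t)`, which agrees with the
piecewise description: for `t ∈ [(k−j)/k, (k−j+1)/k]`,
`λ_k(x,t) = (x_1, …, x_{j−1}, ((k−j+1) − kt)·x_j, 0, …, 0)`. -/
def lambdaMap (k : ℕ) (x : Fin (k - 1) → ℝ) (t : ℝ) : Fin k → ℝ :=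
  fun i => (if h : (i : ℕ) < k - 1 then x ⟨(i : ℕ), h⟩ else 1) *
    max 0 (min 1 ((k : ℝ) - ((i : ℕ) : ℝ) - (k : ℝ) * t))

/-- `π_k : [0,1]^k → ℝ^k`, `(π_k(x))_i = max{x_i, …, x_k}`. -/
def piMap {k : ℕ} (y : Fin k → ℝ) : Fin k → ℝ :=
  fun i => (Finset.univ.filter (fun j => i ≤ j)).sup'
    ⟨i, Finset.mem_filter.mpr ⟨Finset.mem_univ i, le_rfl⟩⟩ y

/-- Igusa's map `Θ_k := π_k ∘ λ_k : [0,1]^{k−1} × [0,1] → ℝ^k`. -/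
def Theta (k : ℕ) (x : Fin (k - 1) → ℝ) (t : ℝ) : Fin k → ℝ := piMap (lambdaMap k x t)

/-- Igusa's map regarded as a map on the cube `[0,1]^k` with coordinates ordered
`(t, x_1, …, x_{k−1})`, i.e. `(t,x) ↦ Θ_k(x,t)`. -/
def ThetaCube (k : ℕ) (y : Fin k → ℝ) : Fin k → ℝ :=
  Theta k (fun i => extF y ((i : ℕ) + 1)) (extF y 0)

/-! ### Auxiliary definitions -/

/-- The linear part of the affine regime of Igusa's map. -/
def Amap (k : ℕ) : (Fin k → ℝ) →ₗ[ℝ] (Fin k → ℝ) where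
  toFun y := fun i => if h : (i : ℕ) + 1 < k then y ⟨(i : ℕ) + 1, h⟩
    else -(k : ℝ) * y ⟨0, i.pos⟩
  map_add' y z := by funext i; by_cases h : (i : ℕ) + 1 < k <;> simp [h] <;> ring
  map_smul' c y := by funext i; by_cases h : (i : ℕ) + 1 < k <;> simp [h] <;> ring

/-- The affine regime of Igusa's map. -/
def wmap (k : ℕ) (y : Fin k → ℝ) : Fin k → ℝ :=
  fun i => if h : (i : ℕ) + 1 < k then y ⟨(i : ℕ) + 1, h⟩
    else 1 - (k : ℝ) * y ⟨0, i.pos⟩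

/-- The good region on which Igusa's map is affine and nondegenerate. -/
def Gset (k : ℕ) (hk : 0 < k) : Set (Fin k → ℝ) :=
  {y | (0 < y ⟨0, hk⟩ ∧ (k : ℝ) * y ⟨0, hk⟩ < 1) ∧
       (∀ i j : Fin k, i < j → wmap k y j < wmap k y i) ∧
       (∀ i : Fin k, 0 < wmap k y i ∧ wmap k y i < 1)}

/-- The interior of the ordered simplex. -/
def simplexInt (k : ℕ) : Set (Fin k → ℝ) :=
  {u | (∀ i j : Fin k, i < j → u j < u i) ∧ ∀ i : Fin k, 0 < u i ∧ u i < 1}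

/-- The open unit cube. -/
def openCube (k : ℕ) : Set (Fin k → ℝ) := {y | ∀ i, y i ∈ Set.Ioo (0 : ℝ) 1}

/-! ### Determinant of `Amap` -/

lemma det_Amap (k : ℕ) (hk : 1 ≤ k) :
    LinearMap.det (Amap k) = (-1) ^ k * (k : ℝ) := by
  obtain ⟨n, rfl⟩ : ∃ n, k = n + 1 := ⟨k - 1, (Nat.succ_pred_eq_of_pos hk).symm⟩
  rw [← LinearMap.det_toMatrix (Pi.basisFun ℝ (Fin (n + 1)))]
  have hM : (LinearMap.toMatrix (Pi.basisFun ℝ (Fin (n+1))) (Pi.basisFun ℝ (Fin (n+1))) (Amap (n+1)))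
      = (Equiv.Perm.permMatrix ℝ (finRotate (n+1))) * Matrix.diagonal
        (fun j : Fin (n+1) => if j = 0 then -((n:ℝ)+1) else 1) := by
    ext i j
    rw [Matrix.mul_apply, Finset.sum_eq_single j ?h1 ?h2]
    case h1 =>
      intro b _ hb
      simp [Matrix.diagonal_apply, hb, Ne.symm hb]
    case h2 => simp
    have hperm : (Equiv.Perm.permMatrix ℝ (finRotate (n+1))) i j
        = if i + 1 = j then 1 else 0 := by
      simp [Equiv.Perm.permMatrix, Equiv.toPEquiv, PEquiv.toMatrix, finRotate_succ_apply]
    rw [LinearMap.toMatrix_apply, hperm, Matrix.diagonal_apply_eq]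
    simp only [Pi.basisFun_apply, Pi.basisFun_repr, Amap, LinearMap.coe_mk, AddHom.coe_mk]
    by_cases h : (i : ℕ) + 1 < n + 1
    · have h1 : (i + 1 : Fin (n+1)) = ⟨(i : ℕ) + 1, h⟩ := by
        rw [Fin.ext_iff, Fin.val_add_one_of_lt]
        exact Fin.lt_last_iff_ne_last.mpr (fun hh => by simp [hh] at h)
      have h2 : (⟨(i:ℕ)+1, h⟩ : Fin (n+1)) ≠ 0 := Fin.ne_of_val_ne (by rw [Fin.val_zero]; exact Nat.succ_ne_zero _)
      rw [dif_pos h, h1, Pi.single_apply]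
      by_cases hj : (⟨(i:ℕ)+1, h⟩ : Fin (n+1)) = j
      · rw [if_pos hj, if_neg (hj ▸ h2), mul_one]
      · rw [if_neg hj, zero_mul]
    · have hi1 : (i + 1 : Fin (n+1)) = 0 := by
        have : i = Fin.last n := by rw [Fin.ext_iff]; simp; omega
        simp [this]
      rw [dif_neg h, hi1, Pi.single_apply]
      by_cases hj : j = 0
      · subst hj; simp
      · rw [if_neg (fun hc => hj (by simp [← hc])), mul_zero,
          if_neg (fun hc => hj hc.symm), zero_mul]
  rw [hM, Matrix.det_mul, Matrix.det_permutation, Matrix.det_diagonal, sign_finRotate]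
  rw [Finset.prod_ite_eq']
  simp
  ring

/-! ### Null sets -/

lemma null_hyperplane {k : ℕ} (l : (Fin k → ℝ) →ₗ[ℝ] ℝ) (hl : l ≠ 0) (c : ℝ) :
    volume {y : Fin k → ℝ | l y = c} = 0 := by
  obtain ⟨v, hv⟩ : ∃ v, l v ≠ 0 := by
    by_contra h; push_neg at h; exact hl (LinearMap.ext fun v => by simp [h v])
  set p := (c / l v) • v with hp_def
  have hp : l p = c := by
    rw [hp_def, l.map_smul, smul_eq_mul]; field_simp
  have hset : {y : Fin k → ℝ | l y = c}
      = (fun y => y + -p) ⁻¹' ((LinearMap.ker l : Submodule ℝ (Fin k → ℝ)) : Set (Fin k → ℝ)) := by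
    ext y
    simp only [Set.mem_setOf_eq, Set.mem_preimage, SetLike.mem_coe, LinearMap.mem_ker,
      map_add, map_neg, hp]
    constructor
    · intro h; rw [h]; ring
    · intro h; linarith
  rw [hset, measure_preimage_add_right]
  exact Measure.addHaar_submodule volume _ (fun h => hl (LinearMap.ker_eq_top.mp h))

lemma ae_ne_hyperplane {k : ℕ} (l : (Fin k → ℝ) →ₗ[ℝ] ℝ) (hl : l ≠ 0) (c : ℝ) :
    ∀ᵐ y : Fin k → ℝ, l y ≠ c := by
  have := null_hyperplane l hl c
  rw [ae_iff]
  simpa using this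

lemma proj_ne_zero {k : ℕ} (i : Fin k) : (LinearMap.proj i : (Fin k → ℝ) →ₗ[ℝ] ℝ) ≠ 0 := by
  intro h
  have := congrArg (fun l : (Fin k → ℝ) →ₗ[ℝ] ℝ => l (Pi.single i 1)) h
  simp at this

lemma proj_sub_ne_zero {k : ℕ} {i j : Fin k} (hij : i ≠ j) :
    ((LinearMap.proj i : (Fin k → ℝ) →ₗ[ℝ] ℝ) - (LinearMap.proj j : (Fin k → ℝ) →ₗ[ℝ] ℝ)) ≠ 0 := by
  intro h
  have := congrArg (fun l : (Fin k → ℝ) →ₗ[ℝ] ℝ => l (Pi.single i 1)) h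
  simp [Pi.single_apply, hij, Ne.symm hij] at this

lemma smul_proj_ne_zero {k : ℕ} (i : Fin k) {c : ℝ} (hc : c ≠ 0) :
    (c • (LinearMap.proj i : (Fin k → ℝ) →ₗ[ℝ] ℝ)) ≠ 0 := by
  intro h
  have := congrArg (fun l : (Fin k → ℝ) →ₗ[ℝ] ℝ => l (Pi.single i 1)) h
  simp [Pi.single_apply] at this
  exact hc this

lemma proj_add_smul_ne_zero {k : ℕ} (i i0 : Fin k) (c : ℝ) (hc : 0 < c) :
    ((LinearMap.proj i : (Fin k → ℝ) →ₗ[ℝ] ℝ) + c • (LinearMap.proj i0 : (Fin k → ℝ) →ₗ[ℝ] ℝ)) ≠ 0 := by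
  intro h
  have h1 := congrArg (fun l : (Fin k → ℝ) →ₗ[ℝ] ℝ => l (Pi.single i 1)) h
  by_cases hii : i0 = i
  · subst hii
    simp [Pi.single_apply] at h1
    linarith
  · simp [Pi.single_apply, hii] at h1

/-! ### `piMap` lemmas -/

lemma piMap_eq_of_antitone {k : ℕ} (v : Fin k → ℝ)
    (h : ∀ i j : Fin k, i ≤ j → v j ≤ v i) : piMap v = v := by
  funext i
  refine le_antisymm (Finset.sup'_le _ _ fun j hj => ?_) (Finset.le_sup' _ ?_)
  · exact h i j (Finset.mem_filter.mp hj).2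
  · exact Finset.mem_filter.mpr ⟨Finset.mem_univ i, le_rfl⟩

lemma piMap_succ {k : ℕ} (v : Fin k → ℝ) (i : Fin k) (h : (i : ℕ) + 1 < k)
    (hle : v i ≤ v ⟨(i : ℕ) + 1, h⟩) : piMap v i = piMap v ⟨(i : ℕ) + 1, h⟩ := by
  have hmem : (⟨(i : ℕ) + 1, h⟩ : Fin k) ∈
      Finset.univ.filter (fun j => (⟨(i : ℕ) + 1, h⟩ : Fin k) ≤ j) :=
    Finset.mem_filter.mpr ⟨Finset.mem_univ _, le_rfl⟩
  refine le_antisymm (Finset.sup'_le _ _ fun j hj => ?_) (Finset.sup'_le _ _ fun j hj => ?_)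
  · have hij : i ≤ j := (Finset.mem_filter.mp hj).2
    by_cases hji : j = i
    · subst hji
      exact le_trans hle (Finset.le_sup' _ hmem)
    · refine Finset.le_sup' _ (Finset.mem_filter.mpr ⟨Finset.mem_univ _, ?_⟩)
      have : (i : ℕ) < (j : ℕ) := lt_of_le_of_ne hij (fun hc => hji (Fin.ext hc.symm ▸ rfl))
      exact Fin.mk_le_of_le_val this
  · have hij : (⟨(i : ℕ) + 1, h⟩ : Fin k) ≤ j := (Finset.mem_filter.mp hj).2
    refine Finset.le_sup' _ (Finset.mem_filter.mpr ⟨Finset.mem_univ _, ?_⟩)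
    exact le_trans (Fin.le_def.mpr (by simp)) hij

lemma piMap_last {k : ℕ} (v : Fin k → ℝ) (i : Fin k) (h : (i : ℕ) = k - 1) :
    piMap v i = v i := by
  refine le_antisymm (Finset.sup'_le _ _ fun j hj => ?_) (Finset.le_sup' _ ?_)
  · have hij : i ≤ j := (Finset.mem_filter.mp hj).2
    have : j = i := by
      have := j.isLt
      exact Fin.ext (by omega)
    rw [this]
  · exact Finset.mem_filter.mpr ⟨Finset.mem_univ i, le_rfl⟩

/-! ### Local formulas for Igusa's map -/

lemma lambda_eq_w {k : ℕ} (hk : 0 < k) (z : Fin k → ℝ)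
    (h0 : 0 < z ⟨0, hk⟩) (h1 : (k : ℝ) * z ⟨0, hk⟩ < 1) :
    lambdaMap k (fun i => extF z ((i : ℕ) + 1)) (extF z 0) = wmap k z := by
  have hz0 : extF z 0 = z ⟨0, hk⟩ := by rw [extF, dif_pos hk]
  funext i
  rw [lambdaMap, wmap, hz0]
  by_cases h : (i : ℕ) + 1 < k
  · have hc : (i : ℕ) < k - 1 := by omega
    have harg : (1 : ℝ) ≤ (k : ℝ) - ((i : ℕ) : ℝ) - (k : ℝ) * z ⟨0, hk⟩ := by
      have : ((i : ℕ) : ℝ) + 2 ≤ (k : ℝ) := by exact_mod_cast (by omega : (i:ℕ) + 2 ≤ k)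
      linarith
    rw [min_eq_left harg, max_eq_right (by linarith : (0:ℝ) ≤ 1), dif_pos hc, dif_pos h, mul_one]
    rw [extF, dif_pos h]
  · have hik : (i : ℕ) = k - 1 := by have := i.isLt; omega
    have hcast : ((i : ℕ) : ℝ) = (k : ℝ) - 1 := by
      rw [hik]; push_cast [Nat.cast_sub hk]; ring
    have hkz : 0 < (k : ℝ) * z ⟨0, hk⟩ := by
      apply mul_pos _ h0; exact_mod_cast hk
    have harg : (k : ℝ) - ((i : ℕ) : ℝ) - (k : ℝ) * z ⟨0, hk⟩ = 1 - (k : ℝ) * z ⟨0, hk⟩ := by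
      rw [hcast]; ring
    rw [harg, dif_neg (by omega : ¬ (i : ℕ) < k - 1), dif_neg h,
      min_eq_right (by linarith), max_eq_right (by linarith), one_mul]

lemma theta_eq_w {k : ℕ} (hk : 0 < k) (z : Fin k → ℝ)
    (h0 : 0 < z ⟨0, hk⟩) (h1 : (k : ℝ) * z ⟨0, hk⟩ < 1)
    (hmono : ∀ i j : Fin k, i ≤ j → wmap k z j ≤ wmap k z i) :
    ThetaCube k z = wmap k z := by
  rw [ThetaCube, Theta, lambda_eq_w hk z h0 h1]
  exact piMap_eq_of_antitone _ hmono

lemma theta_last_zero {k : ℕ} (hk : 0 < k) (z : Fin k → ℝ)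
    (h1 : 1 < (k : ℝ) * extF z 0) :
    ThetaCube k z ⟨k - 1, by omega⟩ = 0 := by
  rw [ThetaCube, Theta, piMap_last _ _ (by simp), lambdaMap]
  have hcast : ((k - 1 : ℕ) : ℝ) = (k : ℝ) - 1 := by
    push_cast [Nat.cast_sub hk]; ring
  have harg : (k : ℝ) - ((k - 1 : ℕ) : ℝ) - (k : ℝ) * extF z 0 = 1 - (k : ℝ) * extF z 0 := by
    rw [hcast]; ring
  simp only [harg]
  rw [min_eq_right (by linarith), max_eq_left (by linarith), mul_zero]

lemma theta_rows_eq {k : ℕ} (hk : 0 < k) (z : Fin k → ℝ)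
    (h0 : 0 < z ⟨0, hk⟩) (h1 : (k : ℝ) * z ⟨0, hk⟩ < 1)
    (i : Fin k) (h : (i : ℕ) + 1 < k) (hle : wmap k z i ≤ wmap k z ⟨(i : ℕ) + 1, h⟩) :
    ThetaCube k z i = ThetaCube k z ⟨(i : ℕ) + 1, h⟩ := by
  rw [ThetaCube, Theta, lambda_eq_w hk z h0 h1]
  exact piMap_succ _ i h hle

/-! ### Openness and continuity -/

lemma continuous_wmap {k : ℕ} (i : Fin k) : Continuous fun y : Fin k → ℝ => wmap k y i := by
  unfold wmap
  by_cases h : (i : ℕ) + 1 < k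
  · simp only [dif_pos h]; exact continuous_apply _
  · simp only [dif_neg h]; fun_prop

lemma isOpen_Gset {k : ℕ} (hk : 0 < k) : IsOpen (Gset k hk) := by
  unfold Gset
  refine IsOpen.and (IsOpen.and ?_ ?_) (IsOpen.and ?_ ?_)
  · exact isOpen_lt continuous_const (continuous_apply _)
  · exact isOpen_lt (by fun_prop) continuous_const
  · rw [setOf_forall]
    refine isOpen_iInter_of_finite fun i => ?_
    rw [setOf_forall]
    refine isOpen_iInter_of_finite fun j => ?_
    by_cases hij : i < j
    · simp only [hij, true_implies]
      exact isOpen_lt (continuous_wmap j) (continuous_wmap i)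
    · simp only [hij, false_implies, setOf_true]
      exact isOpen_univ
  · rw [setOf_forall]
    refine isOpen_iInter_of_finite fun i => ?_
    exact IsOpen.and (isOpen_lt continuous_const (continuous_wmap i))
      (isOpen_lt (continuous_wmap i) continuous_const)

lemma isOpen_openCube (k : ℕ) : IsOpen (openCube k) := by
  unfold openCube
  rw [setOf_forall]
  exact isOpen_iInter_of_finite fun i => isOpen_Ioo.preimage (continuous_apply i)

/-! ### Derivative lemmas -/

lemma hasFDerivAt_wmap (k : ℕ) (y : Fin k → ℝ) :
    HasFDerivAt (wmap k) (LinearMap.toContinuousLinearMap (Amap k)) y := by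
  have hw : wmap k = fun y : Fin k → ℝ =>
      (LinearMap.toContinuousLinearMap (Amap k)) y
        + (fun i : Fin k => if (i : ℕ) + 1 < k then (0:ℝ) else 1) := by
    funext y i
    simp only [wmap, Pi.add_apply, LinearMap.coe_toContinuousLinearMap', Amap,
      LinearMap.coe_mk, AddHom.coe_mk]
    by_cases h : (i : ℕ) + 1 < k
    · rw [dif_pos h, dif_pos h, if_pos h, add_zero]
    · rw [dif_neg h, dif_neg h, if_neg h]; ring
  rw [hw]
  exact (LinearMap.toContinuousLinearMap (Amap k)).hasFDerivAt.add_const _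

lemma det_fderiv_zero_of_not_diff {k : ℕ} (hk : 0 < k) {Φ : (Fin k → ℝ) → Fin k → ℝ}
    {y : Fin k → ℝ} (hd : ¬ DifferentiableAt ℝ Φ y) :
    LinearMap.det ((fderiv ℝ Φ y).toLinearMap) = 0 := by
  rw [fderiv_zero_of_not_differentiableAt hd]
  rw [← LinearMap.det_toMatrix (Pi.basisFun ℝ (Fin k))]
  have : ((0 : (Fin k → ℝ) →L[ℝ] (Fin k → ℝ)) : (Fin k → ℝ) →ₗ[ℝ] (Fin k → ℝ)) = 0 := rfl
  rw [this, map_zero]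
  exact (haveI : Nonempty (Fin k) := ⟨⟨0, hk⟩⟩; Matrix.det_zero)

lemma row_of_fderiv {k : ℕ} {Φ : (Fin k → ℝ) → Fin k → ℝ} {y : Fin k → ℝ}
    (hd : DifferentiableAt ℝ Φ y) (i : Fin k) :
    HasFDerivAt (fun z => Φ z i)
      ((ContinuousLinearMap.proj i).comp (fderiv ℝ Φ y)) y :=
  ((ContinuousLinearMap.proj i : (Fin k → ℝ) →L[ℝ] ℝ).hasFDerivAt).comp y hd.hasFDerivAt

lemma det_fderiv_zero_of_row_const {k : ℕ} (hk : 0 < k) {Φ : (Fin k → ℝ) → Fin k → ℝ}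
    {y : Fin k → ℝ} (i : Fin k) (c : ℝ) (h : ∀ᶠ z in nhds y, Φ z i = c) :
    LinearMap.det ((fderiv ℝ Φ y).toLinearMap) = 0 := by
  by_cases hd : DifferentiableAt ℝ Φ y
  · rw [← LinearMap.det_toMatrix (Pi.basisFun ℝ (Fin k))]
    apply Matrix.det_eq_zero_of_row_eq_zero i
    intro j
    rw [LinearMap.toMatrix_apply]
    have h2 : HasFDerivAt (fun z => Φ z i) (0 : (Fin k → ℝ) →L[ℝ] ℝ) y :=
      (hasFDerivAt_const c y).congr_of_eventuallyEq (h.mono fun z hz => hz)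
    have h3 := (row_of_fderiv hd i).unique h2
    have h4 : (fderiv ℝ Φ y) (Pi.basisFun ℝ (Fin k) j) i = 0 := by
      have := congrArg (fun L : (Fin k → ℝ) →L[ℝ] ℝ => L (Pi.basisFun ℝ (Fin k) j)) h3
      simpa using this
    simpa using h4
  · exact det_fderiv_zero_of_not_diff hk hd

lemma det_fderiv_zero_of_rows_eq {k : ℕ} (hk : 0 < k) {Φ : (Fin k → ℝ) → Fin k → ℝ}
    {y : Fin k → ℝ} (i j : Fin k) (hij : i ≠ j) (h : ∀ᶠ z in nhds y, Φ z i = Φ z j) :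
    LinearMap.det ((fderiv ℝ Φ y).toLinearMap) = 0 := by
  by_cases hd : DifferentiableAt ℝ Φ y
  · rw [← LinearMap.det_toMatrix (Pi.basisFun ℝ (Fin k))]
    apply Matrix.det_zero_of_row_eq hij
    funext l
    rw [LinearMap.toMatrix_apply, LinearMap.toMatrix_apply]
    have h2 : HasFDerivAt (fun z => Φ z i)
        ((ContinuousLinearMap.proj j).comp (fderiv ℝ Φ y)) y :=
      (row_of_fderiv hd j).congr_of_eventuallyEq (h.mono fun z hz => hz)
    have h3 := (row_of_fderiv hd i).unique h2
    have h4 := congrArg (fun L : (Fin k → ℝ) →L[ℝ] ℝ => L (Pi.basisFun ℝ (Fin k) l)) h3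
    simpa using h4
  · exact det_fderiv_zero_of_not_diff hk hd

/-! ### Lipschitz estimate -/

lemma abs_sup'_sub_sup'_le {α : Type*} (s : Finset α) (hs : s.Nonempty) (u v : α → ℝ) (C : ℝ)
    (h : ∀ j ∈ s, |u j - v j| ≤ C) : |s.sup' hs u - s.sup' hs v| ≤ C := by
  have key : ∀ u v : α → ℝ, (∀ j ∈ s, |u j - v j| ≤ C) → s.sup' hs u - s.sup' hs v ≤ C := by
    intro u v h
    rw [sub_le_iff_le_add]
    refine Finset.sup'_le _ _ fun j hj => ?_
    have h1 := abs_le.mp (h j hj)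
    have h2 := Finset.le_sup' v hj
    linarith [h1.2]
  rw [abs_sub_le_iff]
  exact ⟨key u v h, key v u fun j hj => by rw [abs_sub_comm]; exact h j hj⟩

lemma extF_dist {k : ℕ} (y z : Fin k → ℝ) (n : ℕ) : |extF y n - extF z n| ≤ dist y z := by
  unfold extF
  by_cases h : n < k
  · rw [dif_pos h, dif_pos h, ← Real.dist_eq]
    exact dist_le_pi_dist y z _
  · rw [dif_neg h, dif_neg h]
    simpa using dist_nonneg

lemma extF_mem {k : ℕ} {y : Fin k → ℝ} (hy : y ∈ openCube k) (n : ℕ) :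
    0 ≤ extF y n ∧ extF y n ≤ 1 := by
  unfold extF
  by_cases h : n < k
  · rw [dif_pos h]
    exact ⟨(hy _).1.le, (hy _).2.le⟩
  · rw [dif_neg h]; norm_num

lemma clamp_lip (a b : ℝ) : |max 0 (min 1 a) - max 0 (min 1 b)| ≤ |a - b| := by
  calc |max 0 (min 1 a) - max 0 (min 1 b)|
      = |max (min 1 a) 0 - max (min 1 b) 0| := by rw [max_comm, max_comm (0:ℝ)]
    _ ≤ |min 1 a - min 1 b| := abs_max_sub_max_le_abs _ _ _
    _ ≤ max |1 - 1| |a - b| := abs_min_sub_min_le_max _ _ _ _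
    _ ≤ |a - b| := by simp

lemma clamp_mem (a : ℝ) : 0 ≤ max 0 (min 1 a) ∧ max 0 (min 1 a) ≤ 1 :=
  ⟨le_max_left _ _, max_le (by norm_num) (min_le_left _ _)⟩

lemma lipschitzOnWith_ThetaCube (k : ℕ) :
    LipschitzOnWith ((k : NNReal) + 1) (ThetaCube k) (openCube k) := by
  rw [lipschitzOnWith_iff_dist_le_mul]
  intro y hy z hz
  have hcast : (((k : NNReal) + 1 : NNReal) : ℝ) = (k : ℝ) + 1 := by push_cast; ring
  rw [hcast]
  have hd : (0:ℝ) ≤ ((k:ℝ) + 1) * dist y z := by positivity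
  rw [dist_pi_le_iff hd]
  intro i
  rw [Real.dist_eq]
  unfold ThetaCube Theta piMap
  apply abs_sup'_sub_sup'_le
  intro j _
  unfold lambdaMap
  set ay : ℝ := if h : (j : ℕ) < k - 1 then extF y ((j:ℕ)+1) else 1 with hay
  set az : ℝ := if h : (j : ℕ) < k - 1 then extF z ((j:ℕ)+1) else 1 with haz
  set cy : ℝ := max 0 (min 1 ((k : ℝ) - ((j : ℕ) : ℝ) - (k : ℝ) * extF y 0)) with hcy
  set cz : ℝ := max 0 (min 1 ((k : ℝ) - ((j : ℕ) : ℝ) - (k : ℝ) * extF z 0)) with hcz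
  have hcy1 : |cy| ≤ 1 := by
    rw [abs_of_nonneg (clamp_mem _).1]; exact (clamp_mem _).2
  have haz1 : |az| ≤ 1 := by
    rw [haz]
    by_cases h : (j : ℕ) < k - 1
    · rw [dif_pos h, abs_of_nonneg (extF_mem hz _).1]; exact (extF_mem hz _).2
    · rw [dif_neg h]; norm_num
  have hastep : |ay - az| ≤ dist y z := by
    rw [hay, haz]
    by_cases h : (j : ℕ) < k - 1
    · rw [dif_pos h, dif_pos h]; exact extF_dist y z _
    · rw [dif_neg h, dif_neg h]; simpa using dist_nonneg
  have hcstep : |cy - cz| ≤ (k : ℝ) * dist y z := by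
    refine le_trans (clamp_lip _ _) ?_
    have : (k : ℝ) - ((j : ℕ) : ℝ) - (k : ℝ) * extF y 0
        - ((k : ℝ) - ((j : ℕ) : ℝ) - (k : ℝ) * extF z 0)
        = (k : ℝ) * (extF z 0 - extF y 0) := by ring
    rw [this, abs_mul, abs_of_nonneg (by positivity : (0:ℝ) ≤ (k:ℝ)), abs_sub_comm]
    exact mul_le_mul_of_nonneg_left (extF_dist y z 0) (by positivity)
  have hsplit : ay * cy - az * cz = (ay - az) * cy + az * (cy - cz) := by ring
  calc |ay * cy - az * cz| = |(ay - az) * cy + az * (cy - cz)| := by rw [hsplit]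
    _ ≤ |(ay - az) * cy| + |az * (cy - cz)| := abs_add_le _ _
    _ = |ay - az| * |cy| + |az| * |cy - cz| := by rw [abs_mul, abs_mul]
    _ ≤ |ay - az| * 1 + 1 * |cy - cz| := by
        have g1 := mul_le_mul_of_nonneg_left hcy1 (abs_nonneg (ay - az))
        have g2 := mul_le_mul_of_nonneg_right haz1 (abs_nonneg (cy - cz))
        nlinarith [abs_nonneg (ay - az), abs_nonneg (cy - cz)]
    _ = |ay - az| + |cy - cz| := by ring
    _ ≤ dist y z + (k : ℝ) * dist y z := add_le_add hastep hcstep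
    _ = ((k : ℝ) + 1) * dist y z := by ring

/-! ### Main theorem -/

theorem stmt14 (k : ℕ) (hk : 1 ≤ k) :
    (∀ᵐ y ∂(MeasureTheory.volume.restrict (unitCube k)),
      DifferentiableAt ℝ (ThetaCube k) y) ∧
    (∀ f : (Fin k → ℝ) → ℝ, ContinuousOn f (ordSimplex k) →
      ∫ y in unitCube k,
          f (ThetaCube k y) * LinearMap.det ((fderiv ℝ (ThetaCube k) y).toLinearMap)
        = (-1 : ℝ) ^ k * ∫ u in ordSimplex k, f u) := by
  have hk0 : 0 < k := hk
  set i0 : Fin k := ⟨0, hk0⟩ with hi0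
  have hkR : (0:ℝ) < (k:ℝ) := by exact_mod_cast hk0
  have hk1 : (1:ℝ) ≤ (k:ℝ) := by exact_mod_cast hk
  -- measurability of the cube
  have hcube_meas : MeasurableSet (unitCube k) := by
    have : unitCube k = Set.pi Set.univ (fun _ : Fin k => Set.Icc (0:ℝ) 1) := by
      ext y
      simp only [unitCube, Set.mem_setOf_eq, Set.mem_univ_pi]
    rw [this]
    exact MeasurableSet.univ_pi (fun i => measurableSet_Icc)
  have hGmeas : MeasurableSet (Gset k hk0) := (isOpen_Gset hk0).measurableSet
  -- the almost-everywhere good points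
  have hae3 : ∀ᵐ y : Fin k → ℝ, ∀ i : Fin k, y i ≠ 0 := by
    rw [ae_all_iff]
    intro i
    simpa using ae_ne_hyperplane (LinearMap.proj i) (proj_ne_zero i) 0
  have hae4 : ∀ᵐ y : Fin k → ℝ, ∀ i : Fin k, y i ≠ 1 := by
    rw [ae_all_iff]
    intro i
    simpa using ae_ne_hyperplane (LinearMap.proj i) (proj_ne_zero i) 1
  have hae2 : ∀ᵐ y : Fin k → ℝ, (k:ℝ) * y i0 ≠ 1 := by
    have := ae_ne_hyperplane ((k:ℝ) • (LinearMap.proj i0 : (Fin k → ℝ) →ₗ[ℝ] ℝ))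
      (smul_proj_ne_zero i0 (ne_of_gt hkR)) 1
    filter_upwards [this] with y hy
    simpa using hy
  have hae5 : ∀ᵐ y : Fin k → ℝ, ∀ i j : Fin k, i ≠ j → y i ≠ y j := by
    rw [ae_all_iff]
    intro i
    rw [ae_all_iff]
    intro j
    by_cases hij : i = j
    · filter_upwards with y hy; exact absurd hij hy
    · have := ae_ne_hyperplane _ (proj_sub_ne_zero hij) 0
      filter_upwards [this] with y hy _
      intro hc
      apply hy
      simp [hc]
  have hae6 : ∀ᵐ y : Fin k → ℝ, ∀ i : Fin k, y i + (k:ℝ) * y i0 ≠ 1 := by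
    rw [ae_all_iff]
    intro i
    have := ae_ne_hyperplane
      ((LinearMap.proj i : (Fin k → ℝ) →ₗ[ℝ] ℝ) + (k:ℝ) • (LinearMap.proj i0 : (Fin k → ℝ) →ₗ[ℝ] ℝ))
      (proj_add_smul_ne_zero i i0 (k:ℝ) hkR) 1
    filter_upwards [this] with y hy
    simpa using hy
  -- Part 1 : a.e. differentiability
  have part1 : ∀ᵐ y ∂(volume.restrict (unitCube k)), DifferentiableAt ℝ (ThetaCube k) y := by
    have hrad := (lipschitzOnWith_ThetaCube k).ae_differentiableWithinAt_of_mem (μ := volume)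
    rw [ae_restrict_iff' hcube_meas]
    filter_upwards [hrad, hae3, hae4] with y hdiff h3 h4 hycube
    have hyopen : y ∈ openCube k := fun i =>
      ⟨lt_of_le_of_ne (hycube i).1 (Ne.symm (h3 i)), lt_of_le_of_ne (hycube i).2 (h4 i)⟩
    exact (hdiff hyopen).differentiableAt ((isOpen_openCube k).mem_nhds hyopen)
  refine ⟨part1, ?_⟩
  intro f hf
  -- facts about the good region
  have hGsub : Gset k hk0 ⊆ unitCube k := by
    rintro y ⟨⟨h0, h1⟩, hchain, hvals⟩ ⟨m, hm⟩
    rcases m with _ | m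
    · have hEq : (⟨0, hm⟩ : Fin k) = ⟨0, hk0⟩ := rfl
      rw [hEq]
      constructor
      · exact h0.le
      · nlinarith [mul_nonneg (sub_nonneg.mpr hk1) h0.le]
    · have hm1 : (m : ℕ) + 1 < k := hm
      have := hvals ⟨m, by omega⟩
      rw [wmap, dif_pos hm1] at this
      exact ⟨this.1.le, this.2.le⟩
  have hev : ∀ y ∈ Gset k hk0, ThetaCube k =ᶠ[nhds y] wmap k := by
    intro y hy
    filter_upwards [(isOpen_Gset hk0).mem_nhds hy] with z hz
    refine theta_eq_w hk0 z hz.1.1 hz.1.2 fun i j hij => ?_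
    rcases eq_or_lt_of_le hij with h | h
    · rw [h]
    · exact (hz.2.1 i j h).le
  have hfd : ∀ y ∈ Gset k hk0,
      HasFDerivAt (ThetaCube k) (LinearMap.toContinuousLinearMap (Amap k)) y := by
    intro y hy
    exact (hasFDerivAt_wmap k y).congr_of_eventuallyEq (hev y hy)
  have hdetA : LinearMap.det ((LinearMap.toContinuousLinearMap (Amap k)).toLinearMap)
      = (-1)^k * (k:ℝ) := by
    rw [LinearMap.coe_toContinuousLinearMap]
    exact det_Amap k hk
  -- a.e. equality of the integrand with an indicator
  have hae_int : (fun y => f (ThetaCube k y)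
        * LinearMap.det ((fderiv ℝ (ThetaCube k) y).toLinearMap))
      =ᵐ[volume.restrict (unitCube k)]
      (Gset k hk0).indicator (fun y => f (ThetaCube k y) * ((-1)^k * (k:ℝ))) := by
    rw [Filter.EventuallyEq, ae_restrict_iff' hcube_meas]
    filter_upwards [hae2, hae3, hae4, hae5, hae6] with y h2 h3 h4 h5 h6 hycube
    by_cases hyG : y ∈ Gset k hk0
    · rw [Set.indicator_of_mem hyG, (hfd y hyG).fderiv, hdetA]
    · rw [Set.indicator_of_notMem hyG]
      have hdet0 : LinearMap.det ((fderiv ℝ (ThetaCube k) y).toLinearMap) = 0 := by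
        rcases lt_or_gt_of_ne h2 with hlt | hgt
        · -- k * y i0 < 1 : the adjacent-violation case
          have h0 : 0 < y i0 := lt_of_le_of_ne (hycube i0).1 (Ne.symm (h3 i0))
          -- values of wmap are in (0,1) and pairwise distinct
          have hwvals : ∀ i : Fin k, 0 < wmap k y i ∧ wmap k y i < 1 := by
            intro i
            rw [wmap]
            by_cases h : (i:ℕ) + 1 < k
            · rw [dif_pos h]
              exact ⟨lt_of_le_of_ne (hycube _).1 (Ne.symm (h3 _)),
                lt_of_le_of_ne (hycube _).2 (h4 _)⟩
            · rw [dif_neg h]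
              constructor
              · have : y ⟨0, i.pos⟩ = y i0 := rfl
                rw [this]; linarith
              · have : y ⟨0, i.pos⟩ = y i0 := rfl
                rw [this]; nlinarith
          have hwne : ∀ i j : Fin k, i ≠ j → wmap k y i ≠ wmap k y j := by
            intro i j hij
            rw [wmap, wmap]
            by_cases hi : (i:ℕ) + 1 < k <;> by_cases hj : (j:ℕ) + 1 < k
            · rw [dif_pos hi, dif_pos hj]
              exact h5 _ _ (fun hc => hij (Fin.ext (by
                have := Fin.ext_iff.mp hc
                simp only [Fin.val_mk] at this
                omega)))
            · rw [dif_pos hi, dif_neg hj]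
              intro hc
              have : y ⟨0, j.pos⟩ = y i0 := rfl
              rw [this] at hc
              exact h6 ⟨(i:ℕ)+1, hi⟩ (by linarith)
            · rw [dif_neg hi, dif_pos hj]
              intro hc
              have : y ⟨0, i.pos⟩ = y i0 := rfl
              rw [this] at hc
              exact h6 ⟨(j:ℕ)+1, hj⟩ (by linarith)
            · exact absurd (Fin.ext (by have := i.isLt; have := j.isLt; omega)) hij
          by_cases hstrict : ∀ i : Fin k, ∀ h : (i:ℕ)+1 < k, wmap k y ⟨(i:ℕ)+1, h⟩ < wmap k y i
          · -- then y ∈ Gset, contradiction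
            exfalso
            apply hyG
            refine ⟨⟨h0, hlt⟩, ?_, hwvals⟩
            have key : ∀ n : ℕ, ∀ i j : Fin k, (j:ℕ) = (i:ℕ) + (n+1) →
                wmap k y j < wmap k y i := by
              intro n
              induction n with
              | zero =>
                intro i j hij
                have h1 : (i:ℕ)+1 < k := by have := j.isLt; omega
                have hj : j = ⟨(i:ℕ)+1, h1⟩ := Fin.ext (by show (j:ℕ) = (i:ℕ)+1; omega)
                rw [hj]; exact hstrict i h1
              | succ n ih =>
                intro i j hij
                have h1 : (i:ℕ)+1 < k := by have := j.isLt; omega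
                exact lt_trans (ih ⟨(i:ℕ)+1, h1⟩ j (by show (j:ℕ) = (i:ℕ)+1+(n+1); omega))
                  (hstrict i h1)
            intro i j hij
            exact key ((j:ℕ) - (i:ℕ) - 1) i j (by have := Fin.lt_def.mp hij; omega)
          · push_neg at hstrict
            obtain ⟨i, hilt, hige⟩ := hstrict
            have hine : i ≠ ⟨(i:ℕ)+1, hilt⟩ := by simp [Fin.ext_iff]
            have histrict : wmap k y i < wmap k y ⟨(i:ℕ)+1, hilt⟩ :=
              lt_of_le_of_ne hige (hwne _ _ hine)
            apply det_fderiv_zero_of_rows_eq hk0 i ⟨(i:ℕ)+1, hilt⟩ hine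
            have hopen : IsOpen {z : Fin k → ℝ | (0 < z i0 ∧ (k:ℝ) * z i0 < 1)
                ∧ wmap k z i < wmap k z ⟨(i:ℕ)+1, hilt⟩} := by
              refine IsOpen.and (IsOpen.and ?_ ?_) ?_
              · exact isOpen_lt continuous_const (continuous_apply _)
              · exact isOpen_lt (by fun_prop) continuous_const
              · exact isOpen_lt (continuous_wmap _) (continuous_wmap _)
            have hmem : y ∈ {z : Fin k → ℝ | (0 < z i0 ∧ (k:ℝ) * z i0 < 1)
                ∧ wmap k z i < wmap k z ⟨(i:ℕ)+1, hilt⟩} := ⟨⟨h0, hlt⟩, histrict⟩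
            filter_upwards [hopen.mem_nhds hmem] with z hz
            exact theta_rows_eq hk0 z hz.1.1 hz.1.2 i hilt hz.2.le
        · -- 1 < k * y i0 : last row is locally zero
          apply det_fderiv_zero_of_row_const hk0 ⟨k-1, by omega⟩ 0
          have hopen : IsOpen {z : Fin k → ℝ | 1 < (k:ℝ) * z i0} :=
            isOpen_lt continuous_const (by fun_prop)
          have hmem : y ∈ {z : Fin k → ℝ | 1 < (k:ℝ) * z i0} := hgt
          filter_upwards [hopen.mem_nhds hmem] with z hz
          have hz0 : extF z 0 = z i0 := by rw [extF, dif_pos hk0]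
          exact theta_last_zero hk0 z (by rw [hz0]; exact hz)
      rw [hdet0, mul_zero]
  -- injectivity on the good region
  have hinj : Set.InjOn (ThetaCube k) (Gset k hk0) := by
    intro a ha b hb hab
    have hwa : ThetaCube k a = wmap k a := hev a ha |>.self_of_nhds
    have hwb : ThetaCube k b = wmap k b := hev b hb |>.self_of_nhds
    have hw : wmap k a = wmap k b := by rw [← hwa, ← hwb, hab]
    have h0 : a i0 = b i0 := by
      have := congrFun hw ⟨k-1, by omega⟩
      rw [wmap, wmap, dif_neg (by omega : ¬ (k-1) + 1 < k),
        dif_neg (by omega : ¬ (k-1) + 1 < k)] at this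
      have h0' : (k:ℝ) * a ⟨0, hk0⟩ = (k:ℝ) * b ⟨0, hk0⟩ := by linarith
      exact mul_left_cancel₀ (ne_of_gt hkR) h0'
    funext j
    rcases j with ⟨m, hm⟩
    rcases m with _ | m
    · exact h0
    · have hm1 : (m:ℕ) + 1 < k := by omega
      have := congrFun hw ⟨m, by omega⟩
      rw [wmap, wmap, dif_pos hm1, dif_pos hm1] at this
      exact this
  -- image of the good region
  have hImg : ThetaCube k '' Gset k hk0 = simplexInt k := by
    ext u
    constructor
    · rintro ⟨y, hy, rfl⟩
      rw [hev y hy |>.self_of_nhds]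
      exact ⟨hy.2.1, hy.2.2⟩
    · rintro ⟨hchain, hvals⟩
      have hlst : k - 1 < k := Nat.sub_lt hk0 one_pos
      set lst : Fin k := ⟨k - 1, hlst⟩ with hlst_def
      set y : Fin k → ℝ := fun j =>
        if (j:ℕ) = 0 then (1 - u lst) / k else u ⟨(j:ℕ)-1, by have := j.isLt; omega⟩
        with hy_def
      have hy0 : y i0 = (1 - u lst) / k := if_pos rfl
      have hw : wmap k y = u := by
        funext i
        rw [wmap]
        by_cases h : (i:ℕ) + 1 < k
        · rw [dif_pos h]
          show (if ((⟨(i:ℕ)+1, h⟩ : Fin k) : ℕ) = 0 then (1 - u lst) / (k:ℝ)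
            else u ⟨((⟨(i:ℕ)+1, h⟩ : Fin k) : ℕ) - 1, _⟩) = u i
          rw [if_neg (by show ¬ (i:ℕ)+1 = 0; omega)]
          congr 1
        · rw [dif_neg h]
          have hieq : lst = i := Fin.ext (by show k-1 = (i:ℕ); have := i.isLt; omega)
          have hval : y ⟨0, i.pos⟩ = (1 - u lst) / k := hy0
          rw [hval, ← hieq]
          field_simp
          ring
      have hyG : y ∈ Gset k hk0 := by
        have hul := hvals lst
        refine ⟨⟨?_, ?_⟩, ?_, ?_⟩
        · rw [show y ⟨0, hk0⟩ = (1 - u lst) / k from hy0]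
          exact div_pos (by linarith [hul.2]) hkR
        · rw [show y ⟨0, hk0⟩ = (1 - u lst) / k from hy0]
          rw [mul_div_cancel₀ _ (ne_of_gt hkR)]
          linarith [hul.1]
        · intro i j hij; rw [hw]; exact hchain i j hij
        · intro i; rw [hw]; exact hvals i
      refine ⟨y, hyG, ?_⟩
      rw [hev y hyG |>.self_of_nhds, hw]
  -- change of variables
  have hcov := integral_image_eq_integral_abs_det_fderiv_smul volume hGmeas
    (fun y hy => (hfd y hy).hasFDerivWithinAt) hinj f
  have habs : |(LinearMap.toContinuousLinearMap (Amap k)).det| = (k:ℝ) := by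
    have : (LinearMap.toContinuousLinearMap (Amap k)).det = (-1)^k * (k:ℝ) := by
      rw [ContinuousLinearMap.det]
      exact hdetA
    rw [this, abs_mul, abs_pow, abs_neg, abs_one, one_pow, one_mul, abs_of_pos hkR]
  rw [hImg] at hcov
  have hcov2 : ∫ u in simplexInt k, f u = (k:ℝ) * ∫ y in Gset k hk0, f (ThetaCube k y) := by
    rw [hcov]
    simp only [habs, smul_eq_mul]
    exact integral_const_mul _ _
  -- the simplex and its interior agree a.e.
  have hsimp_ae : simplexInt k =ᵐ[volume] ordSimplex k := by
    rw [MeasureTheory.ae_eq_set]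
    constructor
    · have : simplexInt k \ ordSimplex k = ∅ := by
        rw [Set.diff_eq_empty]
        rintro u ⟨hchain, hvals⟩
        refine ⟨fun i => (hvals i).1.le, fun i => (hvals i).2.le, fun i j hij => ?_⟩
        rcases eq_or_lt_of_le hij with h | h
        · rw [h]
        · exact (hchain i j h).le
      rw [this]; simp
    · have hSnull : volume ((⋃ i : Fin k, ({u : Fin k → ℝ | u i = 0}
          ∪ {u : Fin k → ℝ | u i = 1})) ∪ ⋃ i : Fin k, ⋃ j : Fin k,
          {u : Fin k → ℝ | i ≠ j ∧ u i = u j}) = 0 := by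
        apply measure_union_null
        · apply measure_iUnion_null
          intro i
          apply measure_union_null
          · simpa using null_hyperplane (LinearMap.proj i) (proj_ne_zero i) 0
          · simpa using null_hyperplane (LinearMap.proj i) (proj_ne_zero i) 1
        · apply measure_iUnion_null
          intro i
          apply measure_iUnion_null
          intro j
          by_cases hij : i = j
          · subst hij
            have : {u : Fin k → ℝ | i ≠ i ∧ u i = u i} = ∅ := by ext u; simp
            rw [this]; simp
          · refine measure_mono_null ?_ (null_hyperplane _ (proj_sub_ne_zero hij) 0)
            rintro u ⟨_, hu⟩
            simp [hu]
      refine measure_mono_null ?_ hSnull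
      rintro u ⟨hord, hnot⟩
      rw [simplexInt, Set.mem_setOf_eq] at hnot
      push_neg at hnot
      by_cases hc : ∀ i j : Fin k, i < j → u j < u i
      · obtain ⟨i, hi⟩ := hnot hc
        left
        refine Set.mem_iUnion.mpr ⟨i, ?_⟩
        rcases lt_or_ge 0 (u i) with h | h
        · right; exact le_antisymm (hord.2.1 i) (hi h)
        · left; exact le_antisymm h (hord.1 i)
      · push_neg at hc
        obtain ⟨i, j, hij, hle⟩ := hc
        right
        refine Set.mem_iUnion.mpr ⟨i, Set.mem_iUnion.mpr ⟨j, ?_⟩⟩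
        exact ⟨ne_of_lt hij, le_antisymm hle (hord.2.2 i j hij.le)⟩
  -- final computation
  calc ∫ y in unitCube k, f (ThetaCube k y)
        * LinearMap.det ((fderiv ℝ (ThetaCube k) y).toLinearMap)
      = ∫ y in unitCube k, (Gset k hk0).indicator
          (fun y => f (ThetaCube k y) * ((-1)^k * (k:ℝ))) y := integral_congr_ae hae_int
    _ = ∫ y in unitCube k ∩ Gset k hk0, f (ThetaCube k y) * ((-1)^k * (k:ℝ)) :=
        setIntegral_indicator hGmeas
    _ = ∫ y in Gset k hk0, f (ThetaCube k y) * ((-1)^k * (k:ℝ)) := by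
        rw [Set.inter_eq_self_of_subset_right hGsub]
    _ = (∫ y in Gset k hk0, f (ThetaCube k y)) * ((-1)^k * (k:ℝ)) := integral_mul_const _ _
    _ = (-1)^k * ((k:ℝ) * ∫ y in Gset k hk0, f (ThetaCube k y)) := by ring
    _ = (-1)^k * ∫ u in simplexInt k, f u := by rw [← hcov2]
    _ = (-1)^k * ∫ u in ordSimplex k, f u := by
        rw [setIntegral_congr_set hsimp_ae]
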